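/- For the map F(z₀,z₁,z₂) = (z₀(z₀²−z₁²−z₂²), z₁²z₂, z₂(z₀²−z₂²)) on ℂ³, one has ‖F(z)‖₂ ≤ ‖z‖₂³ for all z ∈ ℂ³. -/

import Mathlib

/-- For the map `F(z₀,z₁,z₂) = (z₀(z₀²−z₁²−z₂²), z₁²z₂, z₂(z₀²−z₂²))` on `ℂ³`,
one has `‖F(z)‖₂ ≤ ‖z‖₂³`. -/
theorem stmt_0 (z0 z1 z2 : ℂ) :
    Real.sqrt (‖z0 * (z0 ^ 2 - z1 ^ 2 - z2 ^ 2)‖ ^ 2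
        + ‖z1 ^ 2 * z2‖ ^ 2
        + ‖z2 * (z0 ^ 2 - z2 ^ 2)‖ ^ 2)
      ≤ (Real.sqrt (‖z0‖ ^ 2 + ‖z1‖ ^ 2 + ‖z2‖ ^ 2)) ^ 3 := by
  set a := ‖z0‖ with ha
  set b := ‖z1‖ with hb
  set c := ‖z2‖ with hc
  have ha0 : 0 ≤ a := norm_nonneg _
  have hb0 : 0 ≤ b := norm_nonneg _
  have hc0 : 0 ≤ c := norm_nonneg _
  have hs : 0 ≤ a ^ 2 + b ^ 2 + c ^ 2 := by positivity
  have hrhs : (Real.sqrt (a ^ 2 + b ^ 2 + c ^ 2)) ^ 3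
      = Real.sqrt ((a ^ 2 + b ^ 2 + c ^ 2) ^ 3) := by
    rw [show ((a ^ 2 + b ^ 2 + c ^ 2) ^ 3) = (a ^ 2 + b ^ 2 + c ^ 2) ^ 2 * (a ^ 2 + b ^ 2 + c ^ 2) by ring,
      Real.sqrt_mul (sq_nonneg _), Real.sqrt_sq hs, pow_succ, Real.sq_sqrt hs]
  rw [hrhs]
  apply Real.sqrt_le_sqrt
  have h1 : ‖z0 ^ 2 - z1 ^ 2 - z2 ^ 2‖ ≤ a ^ 2 + b ^ 2 + c ^ 2 := by
    have t1 := norm_sub_le (z0 ^ 2 - z1 ^ 2) (z2 ^ 2)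
    have t2 := norm_sub_le (z0 ^ 2) (z1 ^ 2)
    have e0 : ‖z0 ^ 2‖ = a ^ 2 := by simp [map_pow, ha]
    have e1' : ‖z1 ^ 2‖ = b ^ 2 := by simp [map_pow, hb]
    have e2' : ‖z2 ^ 2‖ = c ^ 2 := by simp [map_pow, hc]
    rw [e0, e1'] at t2
    rw [e2'] at t1
    linarith
  have h2 : ‖z0 ^ 2 - z2 ^ 2‖ ≤ a ^ 2 + c ^ 2 := by
    have := norm_sub_le (z0 ^ 2) (z2 ^ 2)
    simpa [map_pow, ha, hc] using this
  have e1 : ‖z0 * (z0 ^ 2 - z1 ^ 2 - z2 ^ 2)‖ = a * ‖z0 ^ 2 - z1 ^ 2 - z2 ^ 2‖ := by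
    simp [map_mul, ha]
  have e2 : ‖z1 ^ 2 * z2‖ = b ^ 2 * c := by
    simp [map_mul, map_pow, hb, hc]
  have e3 : ‖z2 * (z0 ^ 2 - z2 ^ 2)‖ = c * ‖z0 ^ 2 - z2 ^ 2‖ := by
    simp [map_mul, hc]
  rw [e1, e2, e3]
  have hd0 : 0 ≤ ‖z0 ^ 2 - z1 ^ 2 - z2 ^ 2‖ := norm_nonneg _
  have he0 : 0 ≤ ‖z0 ^ 2 - z2 ^ 2‖ := norm_nonneg _
  nlinarith [sq_nonneg a, sq_nonneg b, sq_nonneg c, sq_nonneg (a*b), sq_nonneg (a*c), sq_nonneg (b*c),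
    mul_le_mul_of_nonneg_left h1 (sq_nonneg a), mul_le_mul h1 h1 hd0 hs,
    mul_le_mul h2 h2 he0 (by positivity : (0:ℝ) ≤ a ^ 2 + c ^ 2),
    mul_nonneg (mul_nonneg ha0 hb0) hc0]
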